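/- arXiv:1202.5396 — 2 statements merged into one kernel-verified Lean document; each statement's English description precedes it below -/
import Mathlib

section
/- Let g be a nonzero Laurent polynomial over ℚ in the variable q, let ε : ℕ → ℤ take only the values 1 and -1, and let p : ℕ → ℚ[q, q⁻¹] be a sequence of nonzero Laurent polynomials such that for every n ≥ 1 both recurrences hold: p(n) = -q·p(n-1) + ε(n)·q^(3n)·g, and p(n+1) = q⁴·p(n-1) + (q³ - q)·p(n). Then there exists a positive integer N such that for all n ≥ N, deg p(n+1) = deg p(n) + 3. -/
open LaurentPolynomial

/-- The degree of a Laurent polynomial: the largest exponent of the variable occurring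
with nonzero coefficient (junk value `0` for the zero polynomial). -/
noncomputable def ldeg (f : LaurentPolynomial ℚ) : ℤ :=
  (LaurentPolynomial.degree f).unbotD 0

section Aux

lemma aux_le_degree {f : LaurentPolynomial ℚ} {m : ℤ} (h : f.coeff m ≠ 0) :
    (m : WithBot ℤ) ≤ f.degree :=
  Finset.le_max (Finsupp.mem_support_iff.mpr h)

lemma aux_degree_le {f : LaurentPolynomial ℚ} {d : ℤ}
    (h2 : ∀ m : ℤ, d < m → f.coeff m = 0) : f.degree ≤ (d : WithBot ℤ) := by
  refine Finset.max_le ?_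
  intro m hm
  rw [Finsupp.mem_support_iff] at hm
  exact_mod_cast WithBot.coe_le_coe.mpr (not_lt.mp fun hlt => hm (h2 m hlt))

lemma aux_degree_eq {f : LaurentPolynomial ℚ} {d : ℤ} (h1 : f.coeff d ≠ 0)
    (h2 : ∀ m : ℤ, d < m → f.coeff m = 0) : f.degree = (d : WithBot ℤ) :=
  le_antisymm (aux_degree_le h2) (aux_le_degree h1)

lemma aux_coeff_ne_zero {f : LaurentPolynomial ℚ} {d : ℤ} (h : f.degree = (d : WithBot ℤ)) :
    f.coeff d ≠ 0 := by
  have := Finset.mem_of_max h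
  rwa [Finsupp.mem_support_iff] at this

lemma aux_coeff_eq_zero {f : LaurentPolynomial ℚ} {m : ℤ} (h : f.degree < (m : WithBot ℤ)) :
    f.coeff m = 0 := by
  by_contra hne
  exact absurd (aux_le_degree hne) (not_le.mpr h)

lemma aux_T_mul_apply (s : ℤ) (f : LaurentPolynomial ℚ) (m : ℤ) :
    ((T s * f : LaurentPolynomial ℚ)).coeff m = f.coeff (m - s) := by
  have hT : (T s : LaurentPolynomial ℚ) = AddMonoidAlgebra.single s (1:ℚ) := rfl
  rw [hT, AddMonoidAlgebra.coeff_single_mul_apply f (1:ℚ) s m, one_mul]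
  congr 1
  ring

lemma aux_degree_T_mul (s : ℤ) (f : LaurentPolynomial ℚ) :
    (T s * f).degree = (s : WithBot ℤ) + f.degree := by
  rcases eq_or_ne f 0 with rfl | hf
  · simp [LaurentPolynomial.degree_zero]
  · obtain ⟨d, hd⟩ := WithBot.ne_bot_iff_exists.mp
      (LaurentPolynomial.degree_eq_bot_iff.not.mpr hf)
    rw [← hd, ← WithBot.coe_add]
    refine aux_degree_eq ?_ ?_
    · rw [aux_T_mul_apply]
      have : s + d - s = d := by ring
      rw [this]
      exact aux_coeff_ne_zero hd.symm
    · intro m hm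
      rw [aux_T_mul_apply]
      refine aux_coeff_eq_zero ?_
      rw [← hd]
      exact_mod_cast (by omega : d < m - s)

lemma aux_degree_neg (f : LaurentPolynomial ℚ) : (-f).degree = f.degree := by
  unfold LaurentPolynomial.degree
  rw [AddMonoidAlgebra.coeff_neg, Finsupp.support_neg]

lemma aux_degree_zsmul {c : ℤ} (hc : c ≠ 0) (f : LaurentPolynomial ℚ) :
    (c • f).degree = f.degree := by
  unfold LaurentPolynomial.degree
  rw [AddMonoidAlgebra.coeff_smul, Finsupp.support_smul_eq hc]

lemma aux_degree_add_le (f g : LaurentPolynomial ℚ) :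
    (f + g).degree ≤ max f.degree g.degree := by
  refine Finset.max_le ?_
  intro m hm
  rw [Finsupp.mem_support_iff, AddMonoidAlgebra.coeff_add, Finsupp.add_apply] at hm
  rcases (by by_contra h; push_neg at h; simp [h.1, h.2] at hm : f.coeff m ≠ 0 ∨ g.coeff m ≠ 0) with h | h
  · exact le_trans (aux_le_degree h) (le_max_left _ _)
  · exact le_trans (aux_le_degree h) (le_max_right _ _)

lemma aux_degree_add_right {f g : LaurentPolynomial ℚ} (h : f.degree < g.degree) :
    (f + g).degree = g.degree := by
  obtain ⟨d, hd⟩ : ∃ d : ℤ, g.degree = (d : WithBot ℤ) := by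
    rcases WithBot.ne_bot_iff_exists.mp (ne_bot_of_gt h) with ⟨d, hd⟩
    exact ⟨d, hd.symm⟩
  rw [hd]
  refine aux_degree_eq ?_ ?_
  · rw [AddMonoidAlgebra.coeff_add, Finsupp.add_apply]
    have hf : f.coeff d = 0 := aux_coeff_eq_zero (by rw [← hd]; exact h)
    rw [hf, zero_add]
    exact aux_coeff_ne_zero hd
  · intro m hm
    rw [AddMonoidAlgebra.coeff_add, Finsupp.add_apply]
    have hf : f.coeff m = 0 := aux_coeff_eq_zero (lt_trans (hd ▸ h) (by exact_mod_cast hm))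
    have hgm : g.coeff m = 0 := aux_coeff_eq_zero (by rw [hd]; exact_mod_cast hm)
    rw [hf, hgm, add_zero]

end Aux

theorem stmt0 (g : LaurentPolynomial ℚ) (hg : g ≠ 0)
    (ε : ℕ → ℤ) (hε : ∀ n, ε n = 1 ∨ ε n = -1)
    (p : ℕ → LaurentPolynomial ℚ) (hp : ∀ n, p n ≠ 0)
    (hrec1 : ∀ n : ℕ, 1 ≤ n → p n = -(T 1) * p (n - 1) + ε n • (T (3 * (n : ℤ)) * g))
    (hrec2 : ∀ n : ℕ, 1 ≤ n → p (n + 1) = T 4 * p (n - 1) + (T 3 - T 1) * p n) :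
    ∃ N : ℕ, 0 < N ∧ ∀ n, N ≤ n → ldeg (p (n + 1)) = ldeg (p n) + 3 := by
  -- degrees of g and p 0 as integers
  obtain ⟨d, hd⟩ := WithBot.ne_bot_iff_exists.mp (LaurentPolynomial.degree_eq_bot_iff.not.mpr hg)
  obtain ⟨d0, hd0⟩ := WithBot.ne_bot_iff_exists.mp
    (LaurentPolynomial.degree_eq_bot_iff.not.mpr (hp 0))
  have hεne : ∀ n, ε n ≠ 0 := fun n => by rcases hε n with h | h <;> simp [h]
  -- upper bound on degree
  have hub : ∀ n : ℕ, (p n).degree ≤ ((max (d0 + n) (3 * n + d) : ℤ) : WithBot ℤ) := by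
    intro n
    induction n with
    | zero =>
      rw [← hd0]
      apply WithBot.coe_le_coe.mpr
      push_cast
      omega
    | succ n ih =>
      have hr := hrec1 (n + 1) (by omega)
      simp only [Nat.add_sub_cancel] at hr
      rw [hr]
      refine le_trans (aux_degree_add_le _ _) (max_le ?_ ?_)
      · rw [neg_mul, aux_degree_neg, aux_degree_T_mul]
        calc (1 : WithBot ℤ) + (p n).degree
            ≤ (1 : WithBot ℤ) + ((max (d0 + n) (3 * n + d) : ℤ) : WithBot ℤ) :=
              add_le_add_right ih _
          _ = ((1 + max (d0 + n) (3 * n + d) : ℤ) : WithBot ℤ) := by push_cast; ring_nf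
          _ ≤ _ := by
              apply WithBot.coe_le_coe.mpr
              push_cast
              omega
      · rw [aux_degree_zsmul (hεne _), aux_degree_T_mul, ← hd]
        rw [← WithBot.coe_add]
        apply WithBot.coe_le_coe.mpr
        push_cast
        omega
  -- exact degree for large n
  set N : ℕ := (d0 - d).toNat + 1 with hN
  have hkey : ∀ n : ℕ, N ≤ n → (p n).degree = ((3 * n + d : ℤ) : WithBot ℤ) := by
    intro n hn
    have hn1 : 1 ≤ n := le_trans (by omega) hn
    have hr := hrec1 n hn1
    rw [hr]
    have h1 : (-(T 1) * p (n - 1)).degree < ((ε n) • (T (3 * (n:ℤ)) * g)).degree := by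
      rw [neg_mul, aux_degree_neg, aux_degree_T_mul,
        aux_degree_zsmul (hεne _), aux_degree_T_mul, ← hd, ← WithBot.coe_add]
      have hub' := hub (n - 1)
      have hcast : ((n - 1 : ℕ) : ℤ) = (n : ℤ) - 1 := by omega
      calc (1 : WithBot ℤ) + (p (n - 1)).degree
          ≤ (1 : WithBot ℤ) + ((max (d0 + (n-1:ℕ)) (3 * (n-1:ℕ) + d) : ℤ) : WithBot ℤ) :=
            add_le_add_right hub' _
        _ = ((1 + max (d0 + (n-1:ℕ)) (3 * (n-1:ℕ) + d) : ℤ) : WithBot ℤ) := by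
            push_cast; ring_nf
        _ < ((3 * (n:ℤ) + d : ℤ) : WithBot ℤ) := by
            apply WithBot.coe_lt_coe.mpr
            rw [hcast]
            have : (d0 - d) ≤ ((d0 - d).toNat : ℤ) := Int.self_le_toNat _
            have hNn : ((N : ℤ)) ≤ (n : ℤ) := by exact_mod_cast hn
            have : d0 - d < (n : ℤ) := by omega
            omega
    rw [aux_degree_add_right h1, aux_degree_zsmul (hεne _), aux_degree_T_mul, ← hd,
      ← WithBot.coe_add]
  refine ⟨N, by omega, fun n hn => ?_⟩
  have h1 := hkey n hn
  have h2 := hkey (n + 1) (by omega)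
  unfold ldeg
  rw [h1, h2, WithBot.unbotD_coe, WithBot.unbotD_coe]
  push_cast
  ring
end

section
/- Let N be a positive integer and let p : ℕ → ℚ[q, q⁻¹] be a sequence of nonzero Laurent polynomials over ℚ such that p(n+1) = q⁴·p(n-1) + (q³ - q)·p(n) for all n ≥ 1. If deg p(N) ≥ deg p(N-1) + 2, then for every n ≥ N we have deg p(n+1) = deg p(n) + 3. -/
open LaurentPolynomial

lemma degree_eq_supDegree (f : LaurentPolynomial ℚ) :
    f.degree = AddMonoidAlgebra.supDegree (WithBot.some) f := by
  rw [degree, Finset.max_eq_sup_withBot]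

lemma support_T_mul (k : ℤ) (f : LaurentPolynomial ℚ) :
    (T k * f).coeff.support = f.coeff.support.map (addLeftEmbedding k) :=
  AddMonoidAlgebra.support_coeff_single_mul (G := ℤ) f 1 (fun y => by simp) k

lemma degree_T_mul (k : ℤ) (f : LaurentPolynomial ℚ) :
    (T k * f).degree = k + f.degree := by
  rw [degree, degree, support_T_mul, Finset.max_eq_sup_withBot, Finset.max_eq_sup_withBot,
    Finset.sup_map]
  have : ((↑) : ℤ → WithBot ℤ) ∘ (addLeftEmbedding k) = (fun x => (k : WithBot ℤ) + x) ∘ (↑) := by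
    funext x; simp [addLeftEmbedding]
  rw [this, ← Finset.comp_sup_eq_sup_comp (fun x : WithBot ℤ => (k : WithBot ℤ) + x)]
  · exact fun x y => by
      rcases le_total x y with h | h
      · rw [sup_eq_right.2 h, sup_eq_right.2 (by exact add_le_add_right h _)]
      · rw [sup_eq_left.2 h, sup_eq_left.2 (by exact add_le_add_right h _)]
  · simp

lemma degree_add_eq_right' (f g : LaurentPolynomial ℚ) (h : f.degree < g.degree) :
    (f + g).degree = g.degree := by
  rw [degree_eq_supDegree] at *
  exact AddMonoidAlgebra.supDegree_add_eq_right h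

lemma degree_sub_eq_left' (f g : LaurentPolynomial ℚ) (h : g.degree < f.degree) :
    (f - g).degree = f.degree := by
  rw [degree_eq_supDegree] at *
  rw [sub_eq_add_neg]
  have : (-g).supDegree (WithBot.some) = g.supDegree WithBot.some :=
    AddMonoidAlgebra.supDegree_neg
  exact AddMonoidAlgebra.supDegree_add_eq_left (this ▸ h)

lemma degree_eq_coe_ldeg {f : LaurentPolynomial ℚ} (hf : f ≠ 0) :
    f.degree = (ldeg f : WithBot ℤ) := by
  have h : f.degree ≠ ⊥ := fun h => hf (degree_eq_bot_iff.mp h)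
  cases hd : f.degree with
  | bot => exact absurd hd h
  | coe d => simp [ldeg, hd]

lemma ldeg_step {a b c : LaurentPolynomial ℚ} (ha : a ≠ 0) (hb : b ≠ 0)
    (hc : c = T 4 * a + (T 3 - T 1) * b) (hgap : ldeg a + 2 ≤ ldeg b) :
    ldeg c = ldeg b + 3 := by
  have h31 : ((T 3 - T 1) * b).degree = ((ldeg b + 3 : ℤ) : WithBot ℤ) := by
    have : (T 3 - T 1) * b = T 3 * b - T 1 * b := by ring
    rw [this, degree_sub_eq_left', degree_T_mul, degree_eq_coe_ldeg hb]
    · exact_mod_cast (by ring : (3 : ℤ) + ldeg b = ldeg b + 3)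
    · rw [degree_T_mul, degree_T_mul, degree_eq_coe_ldeg hb]
      exact_mod_cast (by omega : (1 : ℤ) + ldeg b < 3 + ldeg b)
  have h4 : (T 4 * a).degree = ((4 + ldeg a : ℤ) : WithBot ℤ) := by
    rw [degree_T_mul, degree_eq_coe_ldeg ha]; exact_mod_cast rfl
  have hlt : (T 4 * a).degree < ((T 3 - T 1) * b).degree := by
    rw [h4, h31]
    exact_mod_cast (by omega : (4 : ℤ) + ldeg a < ldeg b + 3)
  have : c.degree = ((ldeg b + 3 : ℤ) : WithBot ℤ) := by
    rw [hc, degree_add_eq_right' _ _ hlt, h31]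
  rw [ldeg, this, WithBot.unbotD_coe]

theorem stmt6 (N : ℕ) (hN : 0 < N)
    (p : ℕ → LaurentPolynomial ℚ) (hp : ∀ n, p n ≠ 0)
    (hrec : ∀ n : ℕ, 1 ≤ n → p (n + 1) = T 4 * p (n - 1) + (T 3 - T 1) * p n)
    (hgap : ldeg (p (N - 1)) + 2 ≤ ldeg (p N)) :
    ∀ n, N ≤ n → ldeg (p (n + 1)) = ldeg (p n) + 3 := by
  have key : ∀ m : ℕ, ldeg (p (N + m - 1)) + 2 ≤ ldeg (p (N + m)) := by
    intro m
    induction m with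
    | zero => simpa using hgap
    | succ k ih =>
      have h1 : 1 ≤ N + k := (by omega : 1 ≤ N + k)
      have hstep : ldeg (p (N + k + 1)) = ldeg (p (N + k)) + 3 :=
        ldeg_step (hp _) (hp _) (hrec (N + k) h1) ih
      have : N + (k + 1) - 1 = N + k := by omega
      rw [this, show N + (k + 1) = N + k + 1 from by omega, hstep]
      omega
  intro n hn
  obtain ⟨m, rfl⟩ := Nat.exists_eq_add_of_le hn
  exact ldeg_step (hp _) (hp _) (hrec (N + m) (by omega : 1 ≤ N + m)) (key m)
end
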